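/- Let f : ℝ² → ℝ and g : ℝ² → ℝ be twice continuously differentiable, and define F(x,y,z) = g(f(x,y), z). Then at every point (x,y,z) ∈ ℝ³ one has ∂²F/∂y∂z · ∂F/∂x = ∂²F/∂x∂z · ∂F/∂y. -/

import Mathlib

/-- If `F(x,y,z) = g(f(x,y), z)` with `f, g` C², then
`F_{yz} F_x = F_{xz} F_y` everywhere on ℝ³. -/
theorem stmt0 (f g : ℝ → ℝ → ℝ)
    (hf : ContDiff ℝ 2 (Function.uncurry f))
    (hg : ContDiff ℝ 2 (Function.uncurry g))
    (F : ℝ → ℝ → ℝ → ℝ)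
    (hF : ∀ x y z, F x y z = g (f x y) z) :
    ∀ x y z : ℝ,
      deriv (fun y' => deriv (fun z' => F x y' z') z) y *
        deriv (fun x' => F x' y z) x =
      deriv (fun x' => deriv (fun z' => F x' y z') z) x *
        deriv (fun y' => F x y' z) y := by
  intro x y z
  set G := Function.uncurry g with hGdef
  have hgd : Differentiable ℝ G := hg.differentiable (by norm_num)
  have hfd : Differentiable ℝ (Function.uncurry f) := hf.differentiable (by norm_num)
  have hDd : Differentiable ℝ (fderiv ℝ G) :=
    (hg.fderiv_right (m := 1) (by norm_num)).differentiable (by norm_num)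
  set u := f x y with hu
  set φ : ℝ → ℝ := fun u' => fderiv ℝ G (u', z) ((0 : ℝ), (1 : ℝ)) with hφ
  set ψ : ℝ → ℝ := fun u' => G (u', z) with hψ
  -- differentiability of φ and ψ
  have hφd : Differentiable ℝ φ := by
    have : Differentiable ℝ (fun u' : ℝ => fderiv ℝ G (u', z)) :=
      hDd.comp (differentiable_id.prodMk (differentiable_const z))
    exact (ContinuousLinearMap.apply ℝ ℝ ((0 : ℝ), (1 : ℝ))).differentiable.comp this
  have hψd : Differentiable ℝ ψ :=
    hgd.comp (differentiable_id.prodMk (differentiable_const z))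
  -- derivatives of f slices
  have hfx : HasDerivAt (fun x' => f x' y) (deriv (fun x' => f x' y) x) x := by
    have : Differentiable ℝ (fun x' => f x' y) :=
      hfd.comp (differentiable_id.prodMk (differentiable_const y))
    exact (this x).hasDerivAt
  have hfy : HasDerivAt (fun y' => f x y') (deriv (fun y' => f x y') y) y := by
    have : Differentiable ℝ (fun y' => f x y') :=
      hfd.comp ((differentiable_const x).prodMk differentiable_id)
    exact (this y).hasDerivAt
  -- inner z-derivative equals φ
  have key : ∀ u' : ℝ, deriv (fun z' => g u' z') z = φ u' := by
    intro u'
    have h1 : HasDerivAt (fun z' : ℝ => (u', z')) ((0 : ℝ), (1 : ℝ)) z :=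
      (hasDerivAt_const z u').prodMk (hasDerivAt_id z)
    have h2 : HasDerivAt (fun z' : ℝ => G (u', z')) (fderiv ℝ G (u', z) ((0:ℝ),(1:ℝ))) z :=
      (hgd (u', z)).hasFDerivAt.comp_hasDerivAt z h1
    exact h2.deriv
  -- compute the four derivatives
  have hFyz : deriv (fun y' => deriv (fun z' => F x y' z') z) y
      = deriv φ u * deriv (fun y' => f x y') y := by
    have e : (fun y' => deriv (fun z' => F x y' z') z) = fun y' => φ (f x y') := by
      funext y'
      simp only [hF]
      exact key (f x y')
    rw [e]
    exact (((hφd u).hasDerivAt).comp y hfy).deriv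
  have hFxz : deriv (fun x' => deriv (fun z' => F x' y z') z) x
      = deriv φ u * deriv (fun x' => f x' y) x := by
    have e : (fun x' => deriv (fun z' => F x' y z') z) = fun x' => φ (f x' y) := by
      funext x'
      simp only [hF]
      exact key (f x' y)
    rw [e]
    exact (((hφd u).hasDerivAt).comp x hfx).deriv
  have hFx : deriv (fun x' => F x' y z) x
      = deriv ψ u * deriv (fun x' => f x' y) x := by
    have e : (fun x' => F x' y z) = fun x' => ψ (f x' y) := by
      funext x'; simp only [hF]; rfl
    rw [e]
    exact (((hψd u).hasDerivAt).comp x hfx).deriv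
  have hFy : deriv (fun y' => F x y' z) y
      = deriv ψ u * deriv (fun y' => f x y') y := by
    have e : (fun y' => F x y' z) = fun y' => ψ (f x y') := by
      funext y'; simp only [hF]; rfl
    rw [e]
    exact (((hψd u).hasDerivAt).comp y hfy).deriv
  rw [hFyz, hFxz, hFx, hFy]
  ring
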